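/- Let H be a real Hilbert space and let L be a Lagrangian subspace of S(H) = H × H such that L ∩ ({0} × H) = {0} and L + ({0} × H) is closed. Then L is the graph of a bounded self-adjoint operator T : H → H. -/

import Mathlib

open RealInnerProductSpace

/-- A Lagrangian subspace `L` of `S(H) = H × H` with `L ∩ ({0} × H) = {0}` and
`L + ({0} × H)` closed is the graph of a bounded self-adjoint operator. -/
theorem statement6 {H : Type*} [NormedAddCommGroup H] [InnerProductSpace ℝ H] [CompleteSpace H]
    (L : Submodule ℝ (H × H))
    (hclosed : IsClosed (L : Set (H × H)))
    (hLag : (L : Set (H × H)) =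
      {q | ∀ p ∈ L, (⟪q.2, p.1⟫ - ⟪q.1, p.2⟫ : ℝ) = 0})
    (htrans : L ⊓ (⊥ : Submodule ℝ H).prod ⊤ = ⊥)
    (hsum : IsClosed ((L ⊔ (⊥ : Submodule ℝ H).prod ⊤ : Submodule ℝ (H × H)) : Set (H × H))) :
    ∃ T : H →L[ℝ] H, (∀ x y : H, ⟪T x, y⟫ = ⟪x, T y⟫) ∧
      (L : Set (H × H)) = {p : H × H | T p.1 = p.2} := by
  haveI : CompleteSpace L := hclosed.completeSpace_coe
  set V : Submodule ℝ (H × H) := (⊥ : Submodule ℝ H).prod ⊤ with hV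
  haveI : CompleteSpace (L ⊔ V : Submodule ℝ (H × H)) := hsum.completeSpace_coe
  -- the projected domain is dense
  set D : Submodule ℝ H := L.map (LinearMap.fst ℝ H H) with hD
  have hDorth : Dᗮ = ⊥ := by
    rw [Submodule.eq_bot_iff]
    intro a ha
    rw [Submodule.mem_orthogonal] at ha
    have haL : ((0 : H), a) ∈ L := by
      have : ((0 : H), a) ∈ {q : H × H | ∀ p ∈ L, (⟪q.2, p.1⟫ - ⟪q.1, p.2⟫ : ℝ) = 0} := by
        intro p hp
        have h := ha p.1 ⟨p, hp, rfl⟩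
        rw [real_inner_comm] at h
        simpa using h
      rw [← hLag] at this
      exact this
    have : ((0 : H), a) ∈ L ⊓ V :=
      ⟨haL, Submodule.mem_prod.mpr ⟨(Submodule.mem_bot ℝ).mpr rfl, Submodule.mem_top⟩⟩
    rw [htrans] at this
    simpa [Prod.ext_iff] using this
  have hDdense : closure (D : Set H) = Set.univ := by
    have := Submodule.topologicalClosure_eq_top_iff.mpr hDorth
    calc closure (D : Set H) = (D.topologicalClosure : Set H) := rfl
      _ = _ := by rw [this]; simp
  -- L ⊔ V = ⊤
  have hsub : (D : Set H) ×ˢ (Set.univ : Set H) ⊆ ((L ⊔ V : Submodule ℝ (H × H)) : Set (H × H)) := by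
    rintro ⟨x, y⟩ ⟨⟨p, hp, rfl⟩, -⟩
    have h1 : ((p.1, y) : H × H) = p + (0, y - p.2) := by simp [Prod.ext_iff]
    show ((p.1, y) : H × H) ∈ L ⊔ V
    rw [h1]
    exact Submodule.add_mem _ (Submodule.mem_sup_left hp)
      (Submodule.mem_sup_right
        (Submodule.mem_prod.mpr ⟨(Submodule.mem_bot ℝ).mpr rfl, Submodule.mem_top⟩))
  have hStop : (L ⊔ V) = ⊤ := by
    rw [Submodule.eq_top_iff']
    intro x
    have : x ∈ closure (((L ⊔ V : Submodule ℝ (H × H)) : Set (H × H))) := by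
      apply closure_mono hsub
      rw [closure_prod_eq, hDdense, closure_univ]
      exact ⟨Set.mem_univ _, Set.mem_univ _⟩
    rwa [hsum.closure_eq] at this
  -- the projection
  set e : L →L[ℝ] H := (ContinuousLinearMap.fst ℝ H H).comp L.subtypeL with he
  have hinj : e.ker = ⊥ := by
    rw [Submodule.eq_bot_iff]
    rintro ⟨p, hp⟩ hker
    have h1 : p.1 = 0 := by simpa [he] using hker
    have : p ∈ L ⊓ V :=
      ⟨hp, Submodule.mem_prod.mpr ⟨(Submodule.mem_bot ℝ).mpr h1, Submodule.mem_top⟩⟩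
    rw [htrans] at this
    simpa [Prod.ext_iff, Subtype.ext_iff] using this
  have hsurj : e.range = ⊤ := by
    rw [LinearMap.range_eq_top]
    intro x
    have : (x, (0 : H)) ∈ L ⊔ V := hStop ▸ Submodule.mem_top
    rcases Submodule.mem_sup.mp this with ⟨y, hy, z, hz, hyz⟩
    have hz1 : z.1 = 0 := by simpa [hV] using hz
    refine ⟨⟨y, hy⟩, ?_⟩
    have : y.1 + z.1 = x := congrArg Prod.fst hyz
    simpa [he, hz1] using this
  set e' : L ≃L[ℝ] H := ContinuousLinearEquiv.ofBijective e hinj hsurj with he'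
  set T : H →L[ℝ] H :=
    ((ContinuousLinearMap.snd ℝ H H).comp L.subtypeL).comp (e'.symm : H →L[ℝ] L) with hT
  have hmemL : ∀ x : H, (x, T x) ∈ L := by
    intro x
    have h1 : ((e'.symm x : H × H)).1 = x := e'.apply_symm_apply x
    have h2 : ((e'.symm x : H × H)).2 = T x := rfl
    have : ((e'.symm x : H × H)) ∈ L := (e'.symm x).2
    rwa [show ((e'.symm x : H × H)) = (x, T x) from Prod.ext h1 h2] at this
  refine ⟨T, ?_, ?_⟩
  · intro x y
    have hx := hmemL x
    have hy := hmemL y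
    have h2 := (Set.ext_iff.mp hLag (x, T x)).mp hx (y, T y) hy
    simp only at h2
    linarith
  · ext p
    simp only [Set.mem_setOf_eq, SetLike.mem_coe]
    constructor
    · intro hp
      have hdiff : p - (p.1, T p.1) ∈ L := Submodule.sub_mem L hp (hmemL p.1)
      have : p - (p.1, T p.1) ∈ L ⊓ V :=
        ⟨hdiff, Submodule.mem_prod.mpr ⟨(Submodule.mem_bot ℝ).mpr (by simp), Submodule.mem_top⟩⟩
      rw [htrans] at this
      have := (Submodule.mem_bot ℝ).mp this
      have h2 : p.2 - T p.1 = 0 := congrArg Prod.snd this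
      exact (sub_eq_zero.mp h2).symm
    · intro hp
      have := hmemL p.1
      rwa [hp, Prod.mk.eta] at this
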